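/- Let C be a finite candidate set and let P be a profile (finite family) of strict total orders on C, each single-peaked with respect to a common axis A. Then the set of candidates that appear as the bottom-ranked candidate of some vote in P has cardinality at most 2. -/

import Mathlib

def VValley {C : Type*} (A V : C → C → Prop) : Prop :=
  ∃ c1 c2 c3 : C, A c1 c2 ∧ A c2 c3 ∧ V c1 c2 ∧ V c3 c2

def UValley {C : Type*} (A V : C → C → Prop) : Prop :=
  ∃ a b c d : C, a ≠ b ∧ a ≠ c ∧ a ≠ d ∧ b ≠ c ∧ b ≠ d ∧ c ≠ d ∧
    A a b ∧ A b d ∧ A a c ∧ A c d ∧ V a b ∧ V d c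

def Extends {C : Type*} (V T : C → C → Prop) : Prop :=
  ∀ x y, V x y → T x y

/-- `V` is a strict partial order: asymmetric and transitive. -/
def IsSPO {C : Type*} (V : C → C → Prop) : Prop :=
  (∀ x y, V x y → ¬ V y x) ∧ (∀ x y z, V x y → V y z → V x z)

/-- `V` is a strict weak order: a strict partial order with transitive incomparability. -/
def IsSWO {C : Type*} (V : C → C → Prop) : Prop :=
  IsSPO V ∧ ∀ x y z, (¬ V x y ∧ ¬ V y x) → (¬ V y z ∧ ¬ V z y) → (¬ V x z ∧ ¬ V z x)

/-- `V` possibly single-peaked w.r.t. axis `A`: it extends to a total order with no v-valley. -/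
def PossSP {C : Type*} (A V : C → C → Prop) : Prop :=
  ∃ T : C → C → Prop, IsStrictTotalOrder C T ∧ Extends V T ∧ ¬ VValley A T

theorem stmt7 {C : Type*} [Fintype C] (A : C → C → Prop) (hA : IsStrictTotalOrder C A)
    (n : ℕ) (V : Fin n → C → C → Prop)
    (hV : ∀ i, IsStrictTotalOrder C (V i))
    (hsp : ∀ i, ¬ VValley A (V i)) :
    Set.ncard {c : C | ∃ i, ∀ c', c' ≠ c → V i c' c} ≤ 2 := by
  classical
  rcases isEmpty_or_nonempty C with hC | hC
  · have : {c : C | ∃ i, ∀ c', c' ≠ c → V i c' c} = ∅ := by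
      ext c; exact iff_of_false (fun _ => IsEmpty.false c) (fun h => h)
    rw [this]; simp
  · -- A is well-founded (finite, irrefl, trans), so has minimal and maximal elements
    haveI : IsTrans C A := hA.toIsTrans
    haveI : IsIrrefl C A := ⟨fun a h => hA.irrefl a h⟩
    haveI : IsTrans C (fun x y => A y x) := ⟨fun a b c h1 h2 => hA.trans _ _ _ h2 h1⟩
    haveI : IsIrrefl C (fun x y => A y x) := ⟨fun a h => hA.irrefl a h⟩
    obtain ⟨m, -, hm⟩ := (Finite.wellFounded_of_trans_of_irrefl A).has_min Set.univ
      (Set.univ_nonempty)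
    obtain ⟨M, -, hM⟩ := (Finite.wellFounded_of_trans_of_irrefl (fun x y : C => A y x)).has_min
      Set.univ (Set.univ_nonempty)
    have hsub : {c : C | ∃ i, ∀ c', c' ≠ c → V i c' c} ⊆ {m, M} := by
      rintro c ⟨i, hc⟩
      by_contra hc'
      simp only [Set.mem_insert_iff, Set.mem_singleton_iff] at hc'
      push_neg at hc'
      obtain ⟨hcm, hcM⟩ := hc'
      have hAm : A m c := by
        rcases @trichotomous_of C A hA.toTrichotomous m c with h | h | h
        · exact h
        · exact absurd h.symm hcm
        · exact absurd h (hm c (Set.mem_univ c))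
      have hAM : A c M := by
        rcases @trichotomous_of C A hA.toTrichotomous c M with h | h | h
        · exact h
        · exact absurd h hcM
        · exact absurd h (hM c (Set.mem_univ c))
      exact hsp i ⟨m, c, M, hAm, hAM, hc m (Ne.symm hcm), hc M (Ne.symm hcM)⟩
    calc Set.ncard {c : C | ∃ i, ∀ c', c' ≠ c → V i c' c}
        ≤ Set.ncard {m, M} := Set.ncard_le_ncard hsub (Set.toFinite _)
      _ ≤ 2 := by
          apply le_trans (Set.ncard_insert_le _ _)
          simp [Set.ncard_singleton]
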